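/- arXiv:2409.13131 — 5 statements merged into one kernel-verified Lean document; each statement's English description precedes it below -/
import Mathlib

section
/- Let C be an LCCDC category and let f : x → y be a morphism. Let ∇_x : x ⨿ x → x and ∇_y : y ⨿ y → y be the codiagonal morphisms. Then the square with top f ⨿ f : x ⨿ x → y ⨿ y, left ∇_x, right ∇_y, bottom f, is cartesian. -/
open CategoryTheory CategoryTheory.Limits MonoidalCategory

section Aux

variable {C : Type u} [Category.{v} C] [HasFiniteCoproducts C] {y : C}

/-- The codiagonal cofan on `Over.mk g` in `Over y` is a colimit binary cofan. -/
noncomputable def overBinaryCofanIsColimit {z : C} (g : z ⟶ y) :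
    IsColimit (BinaryCofan.mk
      (Over.homMk coprod.inl (by simp [coprod.inl_desc]) : Over.mk g ⟶ Over.mk (coprod.desc g g))
      (Over.homMk coprod.inr (by simp [coprod.inr_desc]) : Over.mk g ⟶ Over.mk (coprod.desc g g))) := by
  refine BinaryCofan.isColimitMk
    (fun s => Over.homMk (coprod.desc s.inl.left s.inr.left)
      (by apply coprod.hom_ext <;> simp [Over.w, coprod.inl_desc, coprod.inr_desc] <;> exact Over.w _))
    (fun s => ?_) (fun s => ?_) (fun s m h1 h2 => ?_)
  · ext; simp [coprod.inl_desc, coprod.inr_desc]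
  · ext; simp [coprod.inl_desc, coprod.inr_desc]
  · ext
    apply coprod.hom_ext
    · simpa [coprod.inl_desc] using congrArg CommaMorphism.left h1
    · simpa [coprod.inr_desc] using congrArg CommaMorphism.left h2

end Aux

/-- Let `C` be an LCCDC category and `f : x ⟶ y` a morphism.  The square with
top `f ⨿ f`, left the codiagonal `∇_x`, right the codiagonal `∇_y`, and bottom `f`, is
cartesian. -/
theorem stmt_8 {C : Type u} [Category.{v} C]
    [∀ x : C, CartesianMonoidalCategory (Over x)] [∀ x : C, MonoidalClosed (Over x)]
    [HasFiniteCoproducts C] [BinaryCoproductsDisjoint C]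
    {x y : C} (f : x ⟶ y) :
    IsPullback (coprod.map f f) (coprod.desc (𝟙 x) (𝟙 x)) (coprod.desc (𝟙 y) (𝟙 y)) f := by
  let A : Over y := Over.mk f
  let T : Over y := Over.mk (𝟙 y)
  let B : Over y := Over.mk (coprod.desc (𝟙 y) (𝟙 y))
  let P : Over y := Over.mk (coprod.desc f f)
  have hTterm : IsTerminal T := Over.mkIdTerminal
  let nab : P ⟶ A := Over.homMk (coprod.desc (𝟙 x) (𝟙 x))
    (by apply coprod.hom_ext <;> simp [A, P])
  let ff' : P ⟶ B := Over.homMk (coprod.map f f)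
    (by apply coprod.hom_ext <;> simp [B, P])
  let fan : BinaryFan A B := BinaryFan.mk nab ff'
  have hPcolim := overBinaryCofanIsColimit (y := y) f
  have hBcolim := overBinaryCofanIsColimit (y := y) (𝟙 y)
  have hmap : IsColimit ((tensorLeft A).mapCocone
      (BinaryCofan.mk
        (Over.homMk coprod.inl (by simp [B, T, coprod.inl_desc, coprod.inr_desc]) : T ⟶ B)
        (Over.homMk coprod.inr (by simp [B, T, coprod.inl_desc, coprod.inr_desc]) : T ⟶ B))) :=
    isColimitOfPreserves (tensorLeft A) hBcolim
  let tA : A ⟶ T := Over.homMk f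
  let e : A ≅ A ⊗ T :=
    { hom := CartesianMonoidalCategory.lift (𝟙 A) tA
      inv := CartesianMonoidalCategory.fst A T
      hom_inv_id := by simp
      inv_hom_id := by
        apply CartesianMonoidalCategory.hom_ext <;> simp
        exact hTterm.hom_ext _ _ }
  let γ : pair A A ≅ pair T T ⋙ tensorLeft A :=
    mapPairIso (G := pair (A ⊗ T) (A ⊗ T)) e e ≪≫ (pairComp T T (tensorLeft A)).symm
  have key : CartesianMonoidalCategory.lift nab ff' =
      (IsColimit.coconePointsIsoOfNatIso hPcolim hmap γ).hom := by
    have hLl : (Over.homMk coprod.inl (by simp [A, P, coprod.inl_desc]) : A ⟶ P) ≫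
        CartesianMonoidalCategory.lift nab ff' = CartesianMonoidalCategory.lift (𝟙 A)
          (Over.homMk (f ≫ coprod.inl) (by simp [A, B, coprod.inl_desc]) : A ⟶ B) := by
      apply CartesianMonoidalCategory.hom_ext <;> simp <;> ext <;>
        simp [nab, ff', A, B, P, coprod.inl_desc, coprod.inr_desc]
    have hLr : (Over.homMk coprod.inr (by simp [A, P, coprod.inr_desc]) : A ⟶ P) ≫
        CartesianMonoidalCategory.lift nab ff' = CartesianMonoidalCategory.lift (𝟙 A)
          (Over.homMk (f ≫ coprod.inr) (by simp [A, B, coprod.inr_desc]) : A ⟶ B) := by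
      apply CartesianMonoidalCategory.hom_ext <;> simp <;> ext <;>
        simp [nab, ff', A, B, P, coprod.inl_desc, coprod.inr_desc]
    have hRl : (e.hom ≫ 𝟙 (A ⊗ T)) ≫
        (A ◁ (Over.homMk coprod.inl (by simp [B, T, coprod.inl_desc]) : T ⟶ B)) =
        CartesianMonoidalCategory.lift (𝟙 A)
          (Over.homMk (f ≫ coprod.inl) (by simp [A, B, coprod.inl_desc]) : A ⟶ B) := by
      apply CartesianMonoidalCategory.hom_ext <;> simp [e] <;> ext <;> simp [tA, A, B, T]
    have hRr : (e.hom ≫ 𝟙 (A ⊗ T)) ≫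
        (A ◁ (Over.homMk coprod.inr (by simp [B, T, coprod.inr_desc]) : T ⟶ B)) =
        CartesianMonoidalCategory.lift (𝟙 A)
          (Over.homMk (f ≫ coprod.inr) (by simp [A, B, coprod.inr_desc]) : A ⟶ B) := by
      apply CartesianMonoidalCategory.hom_ext <;> simp [e] <;> ext <;> simp [tA, A, B, T]
    apply hPcolim.hom_ext
    rintro ⟨(_ | _)⟩
    · exact hLl.trans ((IsColimit.comp_coconePointsIsoOfNatIso_hom hPcolim hmap γ ⟨WalkingPair.left⟩).trans hRl).symm
    · exact hLr.trans ((IsColimit.comp_coconePointsIsoOfNatIso_hom hPcolim hmap γ ⟨WalkingPair.right⟩).trans hRr).symm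
  have hiso : IsIso (CartesianMonoidalCategory.lift nab ff') := by rw [key]; exact Iso.isIso_hom _
  have hfan : IsLimit fan :=
    IsLimit.ofPointIso (CartesianMonoidalCategory.tensorProductIsBinaryProduct A B) (i := hiso)
  have h := Over.isPullback_of_binaryFan_isLimit fan hfan
  exact h.flip
end

section
/- Let i : x → y be an epimorphism in an LCCDC category C. Then the dependent product functor Π_i : C/x → C/y sends initial objects to initial objects. -/
open CategoryTheory CategoryTheory.Limits

open MonoidalCategory

section Aux

variable {C : Type*} [Category C]

/-- An object of `Over c` whose underlying object is initial is initial in `Over c`. -/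
noncomputable def auxInitialOver {c : C} (Z : Over c) (h : IsInitial Z.left) : IsInitial Z :=
  IsInitial.ofUniqueHom (fun W => Over.homMk (h.to W.left) (h.hom_ext _ _))
    (fun _ _ => Over.OverMorphism.ext (h.hom_ext _ _))

/-- `Over.mk (initial.to c)` is initial in `Over c`. -/
noncomputable def auxOverMkInitial [HasInitial C] (c : C) : IsInitial (Over.mk (initial.to c)) :=
  auxInitialOver _ initialIsInitial

/-- The underlying object of an initial object of `Over c` is initial. -/
noncomputable def auxLeftInitial [HasInitial C] {c : C} (Z : Over c) (h : IsInitial Z) :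
    IsInitial Z.left :=
  IsInitial.ofIso initialIsInitial
    ((Over.forget c).mapIso ((auxOverMkInitial c).uniqueUpToIso h))

/-- A morphism in `Over c` whose underlying morphism is epi is epi. -/
theorem auxOverEpi {c : C} {U V : Over c} (f : U ⟶ V) (h : Epi f.left) : Epi f :=
  ⟨fun g k e => Over.OverMorphism.ext <| by
    have e' : f.left ≫ g.left = f.left ≫ k.left := by
      rw [← Over.comp_left, ← Over.comp_left, e]
    exact (cancel_epi f.left).1 e'⟩

/-- The explicit pullback binary fan on `Pd` and `Over.mk i` in `Over y` is a limit fan. -/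
noncomputable def auxFanIsLimit [HasPullbacks C] {x y : C} (i : x ⟶ y) (Pd : Over y) :
    IsLimit (BinaryFan.mk
      (Over.homMk (pullback.fst Pd.hom i) rfl :
        Over.mk (pullback.fst Pd.hom i ≫ Pd.hom) ⟶ Pd)
      (Over.homMk (pullback.snd Pd.hom i) pullback.condition.symm :
        Over.mk (pullback.fst Pd.hom i ≫ Pd.hom) ⟶ Over.mk i)) := by
  have wf : ∀ s : BinaryFan Pd (Over.mk i), s.fst.left ≫ Pd.hom = s.pt.hom :=
    fun s => Over.w s.fst
  have wg : ∀ s : BinaryFan Pd (Over.mk i), s.snd.left ≫ i = s.pt.hom :=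
    fun s => Over.w s.snd
  refine BinaryFan.isLimitMk
    (fun s => Over.homMk (pullback.lift s.fst.left s.snd.left ((wf s).trans (wg s).symm))
      (by
        show pullback.lift s.fst.left s.snd.left _ ≫ pullback.fst Pd.hom i ≫ Pd.hom
            = s.pt.hom
        exact (pullback.lift_fst_assoc _ _ _ _).trans (wf s)))
    (fun s => Over.OverMorphism.ext (pullback.lift_fst _ _ _))
    (fun s => Over.OverMorphism.ext (pullback.lift_snd _ _ _))
    (fun s m h1 h2 => Over.OverMorphism.ext (pullback.hom_ext
      ((congrArg CommaMorphism.left h1).trans (pullback.lift_fst _ _ _).symm)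
      ((congrArg CommaMorphism.left h2).trans (pullback.lift_snd _ _ _).symm)))

end Aux

/-- Let `i : x ⟶ y` be an epimorphism in an LCCDC category `C`.  Then the
dependent product functor `Π_i : C/x ⥤ C/y` (any right adjoint of pullback `i^*`) sends initial
objects to initial objects. -/
theorem stmt_10 {C : Type u} [Category.{v} C] [HasPullbacks C]
    [∀ x : C, CartesianMonoidalCategory (Over x)] [∀ x : C, MonoidalClosed (Over x)]
    [HasFiniteCoproducts C] [BinaryCoproductsDisjoint C]
    {x y : C} (i : x ⟶ y) [Epi i]
    (Pi : Over x ⥤ Over y) (adj : Over.pullback i ⊣ Pi) :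
    ∀ A : Over x, IsInitial A → Nonempty (IsInitial (Pi.obj A)) := by
  intro A hA
  haveI : HasInitial C := inferInstance
  -- Notation
  set Pd := Pi.obj A with hPdDef
  -- Step 1: the pullback `i^* (Pi.obj A)` is initial in `Over x`, using the counit and the
  -- strictness of initial objects in the cartesian closed category `Over x`.
  have f0 : (Over.pullback i).obj Pd ⟶ Over.mk (initial.to x) :=
    adj.counit.app A ≫ hA.to _
  haveI : IsIso f0 := strict_initial (auxOverMkInitial x) f0
  have hQo : IsInitial ((Over.pullback i).obj Pd) :=
    (auxOverMkInitial x).ofIso (asIso f0).symm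
  -- hence its underlying object, the pullback of `Pd.hom` and `i`, is initial in `C`.
  have hQ : IsInitial (pullback Pd.hom i) := auxLeftInitial _ hQo
  -- Step 2: the explicit product fan
  have ℓ := auxFanIsLimit i Pd
  have hZ₀ : IsInitial (Over.mk (pullback.fst Pd.hom i ≫ Pd.hom)) :=
    auxInitialOver _ hQ
  -- Step 3: the first projection out of the chosen product `Pd ⊗ Over.mk i` is epi.
  have unitTerminal : IsTerminal (𝟙_ (Over y)) :=
    IsTerminal.ofUniqueHom (fun W => CartesianMonoidalCategory.toUnit W)
      (fun _ m => CartesianMonoidalCategory.toUnit_unique m _)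
  have ψ : Over.mk (𝟙 y) ≅ 𝟙_ (Over y) :=
    Over.mkIdTerminal.uniqueUpToIso unitTerminal
  have hι : Epi (Over.homMk i (by simp) : Over.mk i ⟶ Over.mk (𝟙 y)) :=
    auxOverEpi _ (show Epi i from inferInstance)
  have e1 : CartesianMonoidalCategory.toUnit (Over.mk i) =
      (Over.homMk i (by simp) : Over.mk i ⟶ Over.mk (𝟙 y)) ≫ ψ.hom :=
    CartesianMonoidalCategory.toUnit_unique _ _
  haveI hEpiToUnit : Epi (CartesianMonoidalCategory.toUnit (Over.mk i)) := by
    rw [e1]; exact epi_comp _ _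
  haveI : (MonoidalCategory.tensorLeft Pd).PreservesEpimorphisms :=
    Functor.preservesEpimorphisms_of_adjunction (ihom.adjunction Pd)
  haveI hEpiWhisker : Epi (Pd ◁ CartesianMonoidalCategory.toUnit (Over.mk i)) :=
    (MonoidalCategory.tensorLeft Pd).map_epi (CartesianMonoidalCategory.toUnit (Over.mk i))
  haveI hEpiFstUnit : Epi (CartesianMonoidalCategory.fst Pd (𝟙_ (Over y))) :=
    epi_of_epi_fac (CartesianMonoidalCategory.lift_fst (𝟙 Pd) (CartesianMonoidalCategory.toUnit Pd))
  haveI hEpiFst : Epi (CartesianMonoidalCategory.fst Pd (Over.mk i)) := by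
    rw [← CartesianMonoidalCategory.whiskerLeft_fst Pd
      (CartesianMonoidalCategory.toUnit (Over.mk i))]
    exact epi_comp _ _
  -- Step 4: transfer epi-ness to the projection of the explicit fan.
  have hcomp :
      (ℓ.conePointUniqueUpToIso
          (CartesianMonoidalCategory.tensorProductIsBinaryProduct Pd (Over.mk i))).hom ≫
        CartesianMonoidalCategory.fst Pd (Over.mk i) =
      (Over.homMk (pullback.fst Pd.hom i) rfl :
        Over.mk (pullback.fst Pd.hom i ≫ Pd.hom) ⟶ Pd) :=
    ℓ.conePointUniqueUpToIso_hom_comp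
      (CartesianMonoidalCategory.tensorProductIsBinaryProduct Pd (Over.mk i)) ⟨WalkingPair.left⟩
  haveI hEpiLeg : Epi (Over.homMk (pullback.fst Pd.hom i) rfl :
      Over.mk (pullback.fst Pd.hom i ≫ Pd.hom) ⟶ Pd) := by
    rw [← hcomp]; exact epi_comp _ _
  -- Step 5: any two morphisms out of `Pd` in `Over y` agree.
  have uniq : ∀ {Z : Over y} (g h : Pd ⟶ Z), g = h := by
    intro Z g h
    rw [← cancel_epi (Over.homMk (pullback.fst Pd.hom i) rfl :
      Over.mk (pullback.fst Pd.hom i ≫ Pd.hom) ⟶ Pd)]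
    exact hZ₀.hom_ext _ _
  -- Step 6: hence the two coproduct injections `Pd.left ⟶ Pd.left ⨿ Pd.left` agree.
  have hinl : (coprod.inl : Pd.left ⟶ Pd.left ⨿ Pd.left) = coprod.inr := by
    have h := uniq
      (Over.homMk (coprod.inl : Pd.left ⟶ Pd.left ⨿ Pd.left) (by exact coprod.inl_desc _ _) :
        Pd ⟶ Over.mk (coprod.desc Pd.hom Pd.hom))
      (Over.homMk (coprod.inr : Pd.left ⟶ Pd.left ⨿ Pd.left) (by exact coprod.inr_desc _ _))
    have := congrArg CommaMorphism.left h
    simpa using this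
  -- Step 7: by disjointness of coproducts, `Pd.left` is initial in `C`.
  have comm : 𝟙 Pd.left ≫ (coprod.inl : Pd.left ⟶ Pd.left ⨿ Pd.left) =
      𝟙 Pd.left ≫ coprod.inr := by rw [hinl]
  have pbl : IsLimit (PullbackCone.mk _ _ comm) := by
    refine PullbackCone.IsLimit.mk comm (fun s => s.fst) (fun s => Category.comp_id _)
      (fun s => ?_) (fun s m h1 _ => by simpa using h1)
    have hc : s.fst ≫ (coprod.inl : Pd.left ⟶ Pd.left ⨿ Pd.left) = s.snd ≫ coprod.inl :=
      s.condition.trans (congrArg (fun z => s.snd ≫ z) hinl.symm)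
    rw [Category.comp_id]
    exact (cancel_mono (coprod.inl : Pd.left ⟶ Pd.left ⨿ Pd.left)).1 hc
  have hP : IsInitial Pd.left :=
    IsInitial.ofBinaryCoproductDisjointOfIsColimitOfIsLimit (coprodIsCoprod Pd.left Pd.left) pbl
  exact ⟨auxInitialOver Pd hP⟩
end

section
/- Let D and D' be categories such that D admits binary pullbacks, let F : D → D' be left adjoint to G : D' → D with unit η, and let d ∈ D. Then the induced functor F/d : D/d → D'/Fd is left adjoint to the composite η_d^* ∘ (G/Fd) : D'/Fd → D/d, where η_d^* is pullback along the unit η_d : d → GFd. -/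
open CategoryTheory CategoryTheory.Limits

/-- Let `D` admit binary pullbacks, let `F ⊣ G` with unit `η`, and let `d ∈ D`.
Then `F/d : D/d ⥤ D'/Fd` is left adjoint to `η_d^* ∘ (G/Fd) : D'/Fd ⥤ D/d`. -/
theorem stmt_14 {D : Type u₁} {D' : Type u₂} [Category.{v₁} D] [Category.{v₂} D']
    [HasPullbacks D] (F : D ⥤ D') (G : D' ⥤ D) (adj : F ⊣ G) (d : D) :
    Nonempty (Over.post F (X := d) ⊣ (Over.post G ⋙ Over.pullback (adj.unit.app d))) := by
  refine ⟨Adjunction.mkOfHomEquiv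
    { homEquiv := fun a b => {
        toFun := fun u => Over.homMk
          (pullback.lift (adj.homEquiv _ _ u.left) a.hom
            (by
              erw [Adjunction.homEquiv_unit]
              have hu := Over.w u
              dsimp at hu ⊢
              erw [Category.assoc, ← G.map_comp, hu]
              exact (adj.unit.naturality a.hom).symm))
          (by erw [pullback.lift_snd])
        invFun := fun v => Over.homMk
          ((adj.homEquiv _ _).symm (v.left ≫ pullback.fst _ _))
          (by
            rw [Adjunction.homEquiv_counit]
            dsimp
            have hn : adj.counit.app b.left ≫ b.hom =
                F.map (G.map b.hom) ≫ adj.counit.app (F.obj d) := by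
              set_option linter.unnecessarySimpa false in simpa using (adj.counit.naturality b.hom).symm
            have hv := Over.w v
            dsimp at hv
            have key : (v.left ≫ pullback.fst (G.map b.hom) (adj.unit.app d)) ≫ G.map b.hom
                = a.hom ≫ adj.unit.app d := by
              erw [Category.assoc, pullback.condition, ← Category.assoc, hv]
            erw [Category.assoc, hn, ← F.map_comp_assoc, key, F.map_comp, Category.assoc,
              adj.left_triangle_components]
            simp
            rfl)
        left_inv := fun u => by
          ext
          dsimp
          exact ((adj.homEquiv _ _).symm.congr_arg (pullback.lift_fst _ _ _)).trans
            (Equiv.symm_apply_apply _ _)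
        right_inv := fun v => by
          ext
          dsimp
          apply pullback.hom_ext
          · erw [pullback.lift_fst, Equiv.apply_symm_apply]
            rfl
          · refine (pullback.lift_snd _ _ _).trans ?_
            have hv := Over.w v
            dsimp at hv
            exact hv.symm }
      homEquiv_naturality_left_symm := fun f g => by
        ext
        simp [Adjunction.homEquiv_counit]
        exact (congrArg (fun x => F.map x ≫ adj.counit.app _) (Category.assoc _ _ _)).trans
          ((congrArg (· ≫ _) (F.map_comp _ _)).trans (Category.assoc _ _ _))
      homEquiv_naturality_right := fun f g => by
        ext
        apply pullback.hom_ext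
        · refine (pullback.lift_fst _ _ _).trans ((adj.homEquiv_naturality_right _ _).trans ?_)
          refine Eq.symm ((Category.assoc _ _ _).trans ?_)
          refine (congrArg (_ ≫ ·) (pullback.lift_fst _ _ _)).trans ?_
          exact (Category.assoc _ _ _).symm.trans (congrArg (· ≫ _) (pullback.lift_fst _ _ _))
        · exact (pullback.lift_snd _ _ _).trans (((Category.assoc _ _ _).trans
            ((congrArg (_ ≫ ·) (pullback.lift_snd _ _ _)).trans (pullback.lift_snd _ _ _))).symm) }⟩
end

section
/- Let C be a locally cartesian closed category, i : x → y a morphism, and b an object of C/y. Then pullback along the counit ε^ind_b : Σ_i i^* b → b, as a functor (C/y)/b → (C/y)/(Σ_i i^* b), is equal (naturally isomorphic) to the functor induced by Σ_i ∘ i^* on slices, i.e., (Σ_i ∘ i^*)/b. -/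
open CategoryTheory CategoryTheory.Limits

/-- The counit naturality square of the adjunction `Over.map i ⊣ Over.pullback i` is a
pullback square in `Over y`. -/
theorem stmt17_isPullback {C : Type u} [Category.{v} C] [HasPullbacks C]
    {x y : C} (i : x ⟶ y) (b : Over y) (g : Over b) :
    IsPullback ((Over.mapPullbackAdj i).counit.app g.left)
      ((Over.pullback i ⋙ Over.map i).map g.hom) g.hom
      ((Over.mapPullbackAdj i).counit.app b) := by
  apply IsPullback.of_map (Over.forget y)
    (((Over.mapPullbackAdj i).counit.naturality g.hom)).symm
  simp only [Over.mapPullbackAdj_counit_app, Functor.comp_map, Over.forget_map, Over.homMk_left]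
  dsimp
  have t : IsPullback (pullback.fst b.hom i) (pullback.snd b.hom i) b.hom i :=
    IsPullback.of_hasPullback _ _
  have s : IsPullback (pullback.fst g.left.hom i) (pullback.snd g.left.hom i)
      (g.hom.left ≫ b.hom) i := by
    have := Over.w g.hom
    rw [this]; exact IsPullback.of_hasPullback _ _
  convert IsPullback.of_bot' s t using 1
  apply pullback.hom_ext
  · erw [t.lift_fst]
    exact pullback.lift_fst _ _ _
  · erw [t.lift_snd]
    exact pullback.lift_snd _ _ _

/-- Let `C` be locally cartesian closed, `i : x ⟶ y`, and `b ∈ C/y`.  Pullback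
along the counit `ε^ind_b : Σ_i i^* b ⟶ b`, as a functor `(C/y)/b ⥤ (C/y)/(Σ_i i^* b)`, is
naturally isomorphic to the functor `(Σ_i ∘ i^*)/b` induced on slices. -/
theorem stmt_17 {C : Type u} [Category.{v} C] [HasPullbacks C]
    [∀ x : C, CartesianMonoidalCategory (Over x)] [∀ x : C, MonoidalClosed (Over x)]
    {x y : C} (i : x ⟶ y) (b : Over y) :
    Nonempty (Over.pullback ((Over.mapPullbackAdj i).counit.app b) ≅
      Over.post (Over.pullback i ⋙ Over.map i) (X := b)) := by
  refine ⟨NatIso.ofComponents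
    (fun g => Over.isoMk (stmt17_isPullback i b g).isoPullback.symm
      ((stmt17_isPullback i b g).isoPullback_inv_snd)) (fun {X Y} f => ?_)⟩
  apply Over.OverMorphism.ext
  apply (stmt17_isPullback i b Y).hom_ext
  · dsimp only [Over.comp_left, Over.isoMk, CostructuredArrow.isoMk, Comma.isoMk, CostructuredArrow.homMk, Over.Hom.left]
    simp only [Over.comp_left, Over.pullback_map_left, Over.isoMk_hom_left, Iso.symm_hom,
      Category.assoc, IsPullback.isoPullback_inv_fst, Over.post_map, Functor.comp_map,
      Over.homMk_left, pullback.lift_fst]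
    have := ((Over.mapPullbackAdj i).counit.naturality f.left)
    dsimp at this
    erw [Category.assoc, Category.assoc, this, IsPullback.isoPullback_inv_fst,
      IsPullback.isoPullback_inv_fst_assoc, pullback.lift_fst]
  · dsimp only [Over.comp_left, Over.isoMk, CostructuredArrow.isoMk, Comma.isoMk, CostructuredArrow.homMk, Over.Hom.left]
    simp only [Over.comp_left, Over.pullback_map_left, Over.isoMk_hom_left, Iso.symm_hom,
      Category.assoc, IsPullback.isoPullback_inv_snd, Over.post_map, Functor.comp_map,
      Over.homMk_left, pullback.lift_snd]
    erw [Category.assoc, Category.assoc, IsPullback.isoPullback_inv_snd, pullback.lift_snd,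
      ← Functor.map_comp, ← Functor.map_comp]
    have := Over.w f
    dsimp at this
    erw [this, IsPullback.isoPullback_inv_snd]
end

section
/- Let C be a locally cartesian closed category, i : x → y a morphism, and b an object of C/y. Then the functors Π_{ε^ind_b} ∘ (Σ_i / i^* b) and (η^coind_b)^* ∘ (Π_i / i^* b), both from (C/x)/(i^* b) to (C/y)/b, are naturally isomorphic. -/
open CategoryTheory CategoryTheory.Limits

section Aux

universe v₁ v₂ u₁ u₂

variable {C : Type u₁} {D : Type u₂} [Category.{v₁} C] [Category.{v₂} D]

/-- For an adjunction `F ⊣ G` and an object `u : D`, the functor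
`Over.post G : Over u ⥤ Over (G.obj u)` has a left adjoint, given by `Over.post F` followed by
composition with the counit. -/
def auxPostAdjunction {F : C ⥤ D} {G : D ⥤ C} (adj : F ⊣ G) (u : D) :
    (Over.post (X := G.obj u) F ⋙ Over.map (adj.counit.app u)) ⊣ Over.post (X := u) G :=
  Adjunction.mkOfUnitCounit
    { unit :=
        { app := fun h => Over.homMk (adj.unit.app h.left) (by
            show adj.unit.app h.left ≫ G.map (F.map h.hom ≫ adj.counit.app u) = h.hom
            simp)
          naturality := fun A B f => by
            ext
            exact adj.unit.naturality f.left }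
      counit :=
        { app := fun k => Over.homMk (adj.counit.app k.left) (by
            show adj.counit.app k.left ≫ k.hom = F.map (G.map k.hom) ≫ adj.counit.app u
            exact (adj.counit.naturality k.hom).symm)
          naturality := fun A B f => by
            ext
            exact adj.counit.naturality f.left }
      left_triangle := by
        ext h
        exact (congrArg (_ ≫ ·) (Category.id_comp _)).trans (adj.left_triangle_components h.left)
      right_triangle := by
        ext h
        exact (congrArg (_ ≫ ·) (Category.id_comp _)).trans
          (adj.right_triangle_components h.left) }

end Aux

/-- generalized Hoyer Lemma 2.3.5.  Let `C` be locally cartesian closed,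
`i : x ⟶ y`, and `b ∈ C/y`.  For any dependent-product functors `Π_i` (right adjoint to `i^*`)
and `Π_{ε^ind_b}` (right adjoint to pullback along the counit `ε^ind_b : Σ_i i^* b ⟶ b`),
the functors `Π_{ε^ind_b} ∘ (Σ_i / i^* b)` and `(η^coind_b)^* ∘ (Π_i / i^* b)`,
from `(C/x)/(i^* b)` to `(C/y)/b`, are naturally isomorphic. -/
theorem stmt_18 {C : Type u} [Category.{v} C] [HasPullbacks C]
    [∀ x : C, CartesianMonoidalCategory (Over x)] [∀ x : C, MonoidalClosed (Over x)]
    {x y : C} (i : x ⟶ y) (b : Over y)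
    (Pi : Over x ⥤ Over y) (adjPi : Over.pullback i ⊣ Pi)
    (PiEps : Over ((Over.map i).obj ((Over.pullback i).obj b)) ⥤ Over b)
    (adjEps : Over.pullback ((Over.mapPullbackAdj i).counit.app b) ⊣ PiEps) :
    Nonempty
      ((Over.post (Over.map i) (X := (Over.pullback i).obj b) ⋙ PiEps) ≅
        (Over.post Pi (X := (Over.pullback i).obj b) ⋙ Over.pullback (adjPi.unit.app b))) := by
  let u : Over x := (Over.pullback i).obj b
  let Su : Over y := (Over.map i).obj u
  let εb : Su ⟶ b := (Over.mapPullbackAdj i).counit.app b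
  -- The equivalence `Over u ≌ Over Su` realizing `Over.post (Over.map i)`.
  let E : Over u ≌ Over Su :=
    (Over.iteratedSliceEquiv u).trans (Over.iteratedSliceEquiv Su).symm
  let φ : E.functor ≅ Over.post (X := u) (Over.map i) :=
    NatIso.ofComponents
      (fun A => Over.isoMk
        (Over.isoMk (Iso.refl _) (by
          refine (Category.id_comp _).trans ?_
          dsimp [E, Su, u]
          exact (congrArg (· ≫ i) (Over.w A.hom).symm).trans (Category.assoc _ _ _)))
        (by ext; exact Category.id_comp _))
      (fun f => by ext; exact (Category.comp_id _).trans (Category.id_comp _).symm)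
  -- left adjoint of `Over.post (Over.map i)`
  let adjE : E.inverse ⊣ Over.post (X := u) (Over.map i) :=
    Adjunction.ofNatIsoRight E.symm.toAdjunction φ
  -- adjunction for the left-hand functor
  let adjL : (Over.pullback εb ⋙ E.inverse) ⊣
      (Over.post (Over.map i) (X := u) ⋙ PiEps) := adjEps.comp adjE
  -- adjunction for the right-hand functor
  let adjR : (Over.map (adjPi.unit.app b) ⋙
        (Over.post (Over.pullback i) ⋙ Over.map (adjPi.counit.app u))) ⊣
      (Over.post Pi (X := u) ⋙ Over.pullback (adjPi.unit.app b)) :=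
    (Over.mapPullbackAdj (adjPi.unit.app b)).comp (auxPostAdjunction adjPi u)
  -- the right-hand left adjoint is isomorphic to `Over.post (Over.pullback i)`
  let iso1 : (Over.map (adjPi.unit.app b) ⋙
        (Over.post (Over.pullback i) ⋙ Over.map (adjPi.counit.app u))) ≅
      Over.post (X := b) (Over.pullback i) :=
    NatIso.ofComponents
      (fun g => Over.isoMk (Iso.refl _) (by
        refine (Category.id_comp _).trans ?_
        show (Over.pullback i).map g.hom =
          (Over.pullback i).map (g.hom ≫ adjPi.unit.app b) ≫ adjPi.counit.app u
        rw [Functor.map_comp, Category.assoc,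
          adjPi.left_triangle_components b]
        exact (Category.comp_id _).symm))
      (fun f => by ext; exact (Category.comp_id _).trans (Category.id_comp _).symm)
  -- the left-hand left adjoint is isomorphic to `Over.post (Over.pullback i)` by uniqueness of
  -- right adjoints: both are right adjoint to `E.functor ⋙ Over.map εb`.
  let adjGL : (E.functor ⋙ Over.map εb) ⊣ (Over.pullback εb ⋙ E.inverse) :=
    E.toAdjunction.comp (Over.mapPullbackAdj εb)
  let adjP : (E.functor ⋙ Over.map εb) ⊣ Over.post (X := b) (Over.pullback i) :=
    (auxPostAdjunction (Over.mapPullbackAdj i) b).ofNatIsoLeft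
      (Functor.isoWhiskerRight φ.symm (Over.map εb))
  let iso2 : (Over.pullback εb ⋙ E.inverse) ≅ Over.post (X := b) (Over.pullback i) :=
    adjGL.rightAdjointUniq adjP
  exact ⟨(adjL.ofNatIsoLeft iso2).rightAdjointUniq (adjR.ofNatIsoLeft iso1)⟩
end
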